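/- Let F₂ be the free group on two generators x and y, let γ = x·y·x⁻¹·y⁻¹, and let Q be the quotient of ℤ[F₂] by the additive subgroup generated by all elements [g] − [γᵃ·g·γᵇ] (g ∈ F₂, a, b ∈ ℤ), all elements [g] − [g⁻¹] (g ∈ F₂), the element [1], and all elements [g] − [g·x⁻¹] + [g·x⁻¹·y⁻¹] − [g·y⁻¹] (g ∈ F₂). Then in Q the images of the basis elements [x·y], [y·x], and [x·y⁻¹] are all equal, and each equals the sum of the images of [x] and [y]. -/
import Mathlib


noncomputable section

/-- The free group on two generators `x` and `y`. -/
abbrev F2 := FreeGroup (Fin 2)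

/-- The generator `x`. -/
def x : F2 := FreeGroup.of 0

/-- The generator `y`. -/
def y : F2 := FreeGroup.of 1

/-- The commutator `γ = x·y·x⁻¹·y⁻¹`. -/
def γ : F2 := x * y * x⁻¹ * y⁻¹

/-- The basis element `[g]` of the free abelian group `ℤ[F₂]`. -/
def e (g : F2) : F2 →₀ ℤ := Finsupp.single g 1

/-- The additive subgroup of `ℤ[F₂]` generated by all `[g] − [γᵃ·g·γᵇ]`,
all `[g] − [g⁻¹]`, the element `[1]`, and all
`[g] − [g·x⁻¹] + [g·x⁻¹·y⁻¹] − [g·y⁻¹]`. -/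
def qRel : AddSubgroup (F2 →₀ ℤ) :=
  AddSubgroup.closure
    ({v | ∃ (g : F2) (a b : ℤ), v = e g - e (γ ^ a * g * γ ^ b)} ∪
      {v | ∃ g : F2, v = e g - e g⁻¹} ∪ {e (1 : F2)} ∪
      {v | ∃ g : F2, v = e g - e (g * x⁻¹) + e (g * x⁻¹ * y⁻¹) - e (g * y⁻¹)})

/-- The paper's target group `Λ̃_{[x,y]}/Φ(k)`. -/
abbrev Q := (F2 →₀ ℤ) ⧸ qRel

lemma mk_zero_of_mem {v : F2 →₀ ℤ} (h : v ∈ qRel) :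
    (QuotientAddGroup.mk v : Q) = 0 := (QuotientAddGroup.eq_zero_iff v).mpr h

lemma hR1 (g : F2) (a b : ℤ) :
    (QuotientAddGroup.mk (e g) : Q) = QuotientAddGroup.mk (e (γ ^ a * g * γ ^ b)) := by
  have h : (QuotientAddGroup.mk (e g - e (γ ^ a * g * γ ^ b)) : Q) = 0 :=
    mk_zero_of_mem (AddSubgroup.subset_closure (by
      simp only [Set.mem_union, Set.mem_setOf_eq, Set.mem_singleton_iff]
      exact Or.inl (Or.inl (Or.inl ⟨g, a, b, rfl⟩))))
  rwa [QuotientAddGroup.mk_sub, sub_eq_zero] at h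

lemma hR2 (g : F2) :
    (QuotientAddGroup.mk (e g) : Q) = QuotientAddGroup.mk (e g⁻¹) := by
  have h : (QuotientAddGroup.mk (e g - e g⁻¹) : Q) = 0 :=
    mk_zero_of_mem (AddSubgroup.subset_closure (by
      simp only [Set.mem_union, Set.mem_setOf_eq, Set.mem_singleton_iff]
      exact Or.inl (Or.inl (Or.inr ⟨g, rfl⟩))))
  rwa [QuotientAddGroup.mk_sub, sub_eq_zero] at h

lemma hR3 : (QuotientAddGroup.mk (e (1 : F2)) : Q) = 0 :=
  mk_zero_of_mem (AddSubgroup.subset_closure (by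
    exact Or.inl (Or.inr rfl)))

lemma hR4 (g : F2) :
    (QuotientAddGroup.mk (e g) : Q) - QuotientAddGroup.mk (e (g * x⁻¹))
      + QuotientAddGroup.mk (e (g * x⁻¹ * y⁻¹)) - QuotientAddGroup.mk (e (g * y⁻¹)) = 0 := by
  have h : (QuotientAddGroup.mk (e g - e (g * x⁻¹) + e (g * x⁻¹ * y⁻¹) - e (g * y⁻¹)) : Q) = 0 :=
    mk_zero_of_mem (AddSubgroup.subset_closure (by
      simp only [Set.mem_union, Set.mem_setOf_eq, Set.mem_singleton_iff]
      exact Or.inr ⟨g, rfl⟩))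
  rwa [QuotientAddGroup.mk_sub, QuotientAddGroup.mk_add, QuotientAddGroup.mk_sub] at h

lemma hγ : (QuotientAddGroup.mk (e γ) : Q) = 0 := by
  have h := hR1 1 1 0
  rw [zpow_one, zpow_zero, mul_one, mul_one] at h
  rw [← h, hR3]

theorem stmt16 :
    (QuotientAddGroup.mk (e (x * y)) : Q) = QuotientAddGroup.mk (e (y * x)) ∧
    (QuotientAddGroup.mk (e (x * y)) : Q) = QuotientAddGroup.mk (e (x * y⁻¹)) ∧
    (QuotientAddGroup.mk (e (x * y)) : Q) =
      QuotientAddGroup.mk (e x) + QuotientAddGroup.mk (e y) := by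
  -- [y·x] = [γ·(y·x)] = [x·y]
  have hyx : (QuotientAddGroup.mk (e (x * y)) : Q) = QuotientAddGroup.mk (e (y * x)) := by
    have h := hR1 (y * x) 1 0
    have hg : γ ^ (1 : ℤ) * (y * x) * γ ^ (0 : ℤ) = x * y := by
      rw [zpow_one, zpow_zero, mul_one, γ]; group
    rw [hg] at h
    exact h.symm
  -- [x·y·x⁻¹] = [γ·y] = [y]
  have hconj : (QuotientAddGroup.mk (e (x * y * x⁻¹)) : Q) = QuotientAddGroup.mk (e y) := by
    have h := hR1 y 1 0
    have hg : γ ^ (1 : ℤ) * y * γ ^ (0 : ℤ) = x * y * x⁻¹ := by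
      rw [zpow_one, zpow_zero, mul_one, γ]; group
    rw [hg] at h
    exact h.symm
  -- main relation: [x·y] = [x] + [y]
  have hmain : (QuotientAddGroup.mk (e (x * y)) : Q) =
      QuotientAddGroup.mk (e x) + QuotientAddGroup.mk (e y) := by
    have h := hR4 (x * y)
    have h1 : x * y * x⁻¹ * y⁻¹ = γ := rfl
    have h2 : x * y * y⁻¹ = x := by group
    rw [h1, h2, hγ, hconj, add_zero, sub_sub, sub_eq_zero] at h
    rw [h, add_comm]
  -- [x·y⁻¹] = [x] + [y]
  have hxyinv : (QuotientAddGroup.mk (e (x * y)) : Q) = QuotientAddGroup.mk (e (x * y⁻¹)) := by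
    have h := hR4 x
    have h1 : x * x⁻¹ = (1 : F2) := by group
    have h2 : (1 : F2) * y⁻¹ = y⁻¹ := one_mul _
    rw [h1, h2, hR3, sub_zero, ← hR2 y] at h
    rw [hmain, eq_comm, ← sub_eq_zero]
    rw [sub_eq_zero] at h ⊢
    rw [h]
  exact ⟨hyx, hxyinv, hmain⟩
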